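/- Let H be a PICOD problem on m messages in which every request-set R_1,...,R_n is nonempty. Then for every prime power q, β_q(H) ≤ Δ(H): there exists a PICOD scheme for H over F_q of length at most the maximum degree Δ(H). -/

import Mathlib

/-- A PICOD scheme of length `ℓ` over the field `F` for the PICOD problem with
vertex type `V`, client index type `ι`, and request-sets `R i`:
an encoder, a decoding choice `d i ∈ R i` for each client, and decoders such
that each client `i` recovers `b (d i)` from the encoded transmissions and its
side-information (the messages outside its request-set). -/
def HasPICODScheme {V ι : Type} (R : ι → Finset V) (F : Type) [Field F]
    (ℓ : ℕ) : Prop :=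
  ∃ (Enc : (V → F) → (Fin ℓ → F)) (d : ι → V)
    (Dec : (i : ι) → (Fin ℓ → F) → ({j : V // j ∉ R i} → F) → F),
    (∀ i, d i ∈ R i) ∧
    ∀ (i : ι) (b : V → F), Dec i (Enc b) (fun j => b j.1) = b (d i)

/-- `β_q(H)`: the minimum length of a PICOD scheme over `F` (`= F_q`). -/
noncomputable def picodBeta {V ι : Type} (R : ι → Finset V) (F : Type)
    [Field F] : ℕ :=
  sInf {ℓ | HasPICODScheme R F ℓ}

/-- `β(H)`: the minimum of `β_q(H)` over all prime powers `q`. -/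
noncomputable def picodBetaMin {V ι : Type} (R : ι → Finset V) : ℕ :=
  sInf {ℓ | ∃ (p k : ℕ) (hp : p.Prime), k ≠ 0 ∧
    haveI : Fact p.Prime := ⟨hp⟩
    HasPICODScheme R (GaloisField p k) ℓ}

/-- The degree of a vertex: the number of request-sets containing it. -/
noncomputable def picodDegree {V ι : Type} [Fintype ι] (R : ι → Finset V) (v : V) : ℕ :=
  (@Finset.filter _ (fun i => v ∈ R i) (Classical.decPred _) Finset.univ).card

/-- The maximum degree `Δ(H)` of the hypergraph. -/
noncomputable def maxDegree {V ι : Type} [Fintype V] [Fintype ι] (R : ι → Finset V) : ℕ :=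
  Finset.univ.sup (picodDegree R)

/-- A nested collection of hyperedges of length `L`: levels `E 0, ..., E (L-1)`
of edges of the hypergraph, `|E i| = 2^i`, and every edge of a level contains
two disjoint nonempty edges of the next level. -/
def IsNestedCollection {V ι : Type} [DecidableEq V] (R : ι → Finset V)
    (L : ℕ) (E : Fin L → Finset (Finset V)) : Prop :=
  (∀ i : Fin L, ∀ e ∈ E i, ∃ j : ι, R j = e) ∧
  (∀ i : Fin L, (E i).card = 2 ^ (i : ℕ)) ∧
  (∀ i : Fin L, ∀ hi : (i : ℕ) + 1 < L, ∀ e ∈ E i,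
    ∃ e' ∈ E ⟨(i : ℕ) + 1, hi⟩, ∃ e'' ∈ E ⟨(i : ℕ) + 1, hi⟩,
      e'.Nonempty ∧ e''.Nonempty ∧ e' ⊂ e ∧ e'' ⊂ e ∧ e' ∩ e'' = ∅)

/-- The nesting number `η(H)`: the maximum length of a nested collection. -/
noncomputable def nestingNumber {V ι : Type} [DecidableEq V]
    (R : ι → Finset V) : ℕ :=
  sSup {L | ∃ E : Fin L → Finset (Finset V), IsNestedCollection R L E}

lemma picodDegree_eq {V ι : Type} [Fintype ι] (R : ι → Finset V) (v : V)
    [DecidablePred fun i => v ∈ R i] :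
    picodDegree R v = (Finset.univ.filter fun i => v ∈ R i).card := by
  rw [picodDegree, Finset.filter_congr_decidable]

lemma picod_aux (m : ℕ) (F : Type) [Field F] :
    ∀ (Δ : ℕ) (ι : Type) [Fintype ι] (R : ι → Finset (Fin m)),
      (∀ i, (R i).Nonempty) → maxDegree R ≤ Δ → HasPICODScheme R F Δ := by
  intro Δ
  induction Δ with
  | zero =>
    intro ι _ R hR hΔ
    have hempty : IsEmpty ι := by
      constructor
      intro i
      obtain ⟨v, hv⟩ := hR i
      classical
      have h1 : 0 < picodDegree R v := by
        rw [picodDegree_eq, Finset.card_pos]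
        exact ⟨i, Finset.mem_filter.2 ⟨Finset.mem_univ _, hv⟩⟩
      have h2 : picodDegree R v ≤ maxDegree R := Finset.le_sup (Finset.mem_univ v)
      omega
    exact ⟨fun _ i => i.elim0, fun i => (hR i).choose, fun _ _ _ => 0,
      fun i => (hR i).choose_spec, fun i _ => (hempty.false i).elim⟩
  | succ Δ ih =>
    intro ι _ R hR hΔ
    classical
    obtain ⟨S, hSP, hSmax⟩ : ∃ S : Finset (Fin m), (∀ i, (R i ∩ S).card ≤ 1) ∧
        ∀ T, (∀ i, (R i ∩ T).card ≤ 1) → T.card ≤ S.card := by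
      obtain ⟨S, hS, hmax⟩ := Finset.exists_max_image
        ((Finset.univ : Finset (Finset (Fin m))).filter
          (fun S => ∀ i, (R i ∩ S).card ≤ 1)) Finset.card ⟨∅, by simp⟩
      exact ⟨S, (Finset.mem_filter.1 hS).2,
        fun T hT => hmax T (Finset.mem_filter.2 ⟨Finset.mem_univ T, hT⟩)⟩
    have hsingle : ∀ i (h : (R i ∩ S).Nonempty), R i ∩ S = {h.choose} := by
      intro i h
      exact Finset.eq_singleton_iff_unique_mem.2
        ⟨h.choose_spec, fun w hw => Finset.card_le_one.1 (hSP i) w hw _ h.choose_spec⟩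
    set ι' := {i : ι // ¬ (R i ∩ S).Nonempty} with hι'
    have hΔ' : maxDegree (fun i' : ι' => R i'.1) ≤ Δ := by
      apply Finset.sup_le
      intro v _
      rw [picodDegree_eq]
      by_cases hc : ∃ i0 : ι, v ∈ R i0 ∧ (R i0 ∩ S).Nonempty
      · obtain ⟨i0, hi0v, hi0s⟩ := hc
        have key : ∀ A : Finset ι', (∀ x ∈ A, v ∈ R x.1) → A.card ≤ Δ := by
          intro A hA
          have hsub : A.image Subtype.val ⊆
              (Finset.univ.filter (fun i : ι => v ∈ R i)).erase i0 := by
            intro x hx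
            obtain ⟨i', hi', rfl⟩ := Finset.mem_image.1 hx
            refine Finset.mem_erase.2 ⟨?_,
              Finset.mem_filter.2 ⟨Finset.mem_univ _, hA i' hi'⟩⟩
            intro hx0
            exact i'.2 (by rw [hx0]; exact hi0s)
          have hcard : A.card ≤
              ((Finset.univ.filter (fun i : ι => v ∈ R i)).erase i0).card := by
            rw [← Finset.card_image_of_injective A Subtype.val_injective]
            exact Finset.card_le_card hsub
          have hi0mem : i0 ∈ Finset.univ.filter (fun i : ι => v ∈ R i) :=
            Finset.mem_filter.2 ⟨Finset.mem_univ _, hi0v⟩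
          rw [Finset.card_erase_of_mem hi0mem] at hcard
          have hD : (Finset.univ.filter (fun i : ι => v ∈ R i)).card ≤ Δ + 1 := by
            have h2 : picodDegree R v ≤ maxDegree R := Finset.le_sup (Finset.mem_univ v)
            rw [picodDegree_eq] at h2
            omega
          omega
        apply key
        intro x hx
        exact (Finset.mem_filter.1 hx).2
      · push_neg at hc
        have key : ∀ A : Finset ι', (∀ x ∈ A, v ∈ R x.1) → A.card ≤ Δ := by
          intro A hA
          rcases A.eq_empty_or_nonempty with rfl | ⟨i1, hi1⟩
          · simp
          · exfalso
            have hv1 : v ∈ R i1.1 := hA i1 hi1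
            have hvS : v ∉ S := fun hvS => i1.2 ⟨v, Finset.mem_inter.2 ⟨hv1, hvS⟩⟩
            have hPins : ∀ i, (R i ∩ insert v S).card ≤ 1 := by
              intro i
              by_cases hvi : v ∈ R i
              · have hemp : R i ∩ S = ∅ :=
                  hc i hvi
                have hsub : R i ∩ insert v S ⊆ {v} := by
                  intro w hw
                  obtain ⟨hw1, hw2⟩ := Finset.mem_inter.1 hw
                  rcases Finset.mem_insert.1 hw2 with rfl | hw2
                  · exact Finset.mem_singleton_self _
                  · exact absurd (Finset.mem_inter.2 ⟨hw1, hw2⟩) (by simp [hemp])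
                calc (R i ∩ insert v S).card ≤ ({v} : Finset (Fin m)).card :=
                      Finset.card_le_card hsub
                  _ ≤ 1 := by simp
              · have heq : R i ∩ insert v S = R i ∩ S := by
                  ext w
                  simp only [Finset.mem_inter, Finset.mem_insert]
                  constructor
                  · rintro ⟨hw1, rfl | hw2⟩
                    · exact absurd hw1 hvi
                    · exact ⟨hw1, hw2⟩
                  · rintro ⟨hw1, hw2⟩
                    exact ⟨hw1, Or.inr hw2⟩
                rw [heq]; exact hSP i
            have := hSmax (insert v S) hPins
            rw [Finset.card_insert_of_notMem hvS] at this
            omega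
        apply key
        intro x hx
        exact (Finset.mem_filter.1 hx).2
    obtain ⟨Enc', d', Dec', hd', hDec'⟩ :=
      ih ι' (fun i' => R i'.1) (fun i' => hR i'.1) hΔ'
    refine ⟨fun b => Fin.cons (∑ v ∈ S, b v) (Enc' b),
      fun i => if h : (R i ∩ S).Nonempty then h.choose else d' ⟨i, h⟩,
      fun i y s => if h : (R i ∩ S).Nonempty then
          y 0 - ∑ v ∈ (S \ R i).attach, s ⟨v.1, (Finset.mem_sdiff.1 v.2).2⟩
        else Dec' ⟨i, h⟩ (Fin.tail y) s, ?_, ?_⟩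
    · intro i
      by_cases h : (R i ∩ S).Nonempty
      · simp only [dif_pos h]
        exact (Finset.mem_inter.1 h.choose_spec).1
      · simp only [dif_neg h]
        exact hd' ⟨i, h⟩
    · intro i b
      by_cases h : (R i ∩ S).Nonempty
      · simp only [dif_pos h, Fin.cons_zero]
        rw [Finset.sum_attach (S \ R i) (fun v => b v)]
        have hss : S ∩ R i = {h.choose} := by
          rw [Finset.inter_comm]; exact hsingle i h
        have hsd : S \ R i = S \ (S ∩ R i) :=
          (Finset.sdiff_inter_self_left S (R i)).symm
        have hvS : h.choose ∈ S := (Finset.mem_inter.1 h.choose_spec).2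
        rw [hsd, hss, Finset.sum_sdiff_eq_sub (Finset.singleton_subset_iff.2 hvS)]
        simp
      · simp only [dif_neg h, Fin.tail_cons]
        exact hDec' ⟨i, h⟩ b

/-- For a PICOD problem on `m` messages with all request-sets
nonempty, and for every prime power `q` (i.e., every finite field `F`),
`β_q(H) ≤ Δ(H)`. -/
theorem picod_beta_le_maxDegree (m n : ℕ) (R : Fin n → Finset (Fin m))
    (hR : ∀ i, (R i).Nonempty)
    (F : Type) [Field F] [Fintype F] :
    picodBeta R F ≤ maxDegree R := by
  have h := picod_aux m F (maxDegree R) (Fin n) R hR le_rfl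
  exact Nat.sInf_le h
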